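/- Let d ≥ 1 and let H be a graph on n vertices with maximum degree at most d having no connected component isomorphic to K_{d+1}. Then every subgraph S of H without isolated vertices, with s edges and maximum forest size f, satisfies f/s ≥ 2/(d+1) + 1/((d+2)(d+1)d). -/

import Mathlib

open Finset

section Helpers

open Finset SimpleGraph

variable {V : Type*}

/-- Adding an edge between vertices not reachable from each other keeps a graph acyclic. -/
lemma my_acyclic_sup {G : SimpleGraph V} (hG : G.IsAcyclic) {u v : V}
    (hur : ¬ G.Reachable u v) :
    (G ⊔ SimpleGraph.fromEdgeSet {s(u, v)}).IsAcyclic := by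
  have huv : u ≠ v := fun h => hur (h ▸ Reachable.refl u)
  intro x c hc
  by_cases he : s(u, v) ∈ c.edges
  · have h2 := (adj_and_reachable_delete_edges_iff_exists_cycle.mpr ⟨x, c, hc, he⟩).2
    apply hur
    refine h2.mono ?_
    intro a b hab
    rcases hab with ⟨hab1 | hab1, hab2⟩
    · exact hab1
    · exact absurd hab1 hab2
  · have hsub : ∀ e ∈ c.edges, e ∈ G.edgeSet := by
      intro e hec
      have := c.edges_subset_edgeSet hec
      rw [edgeSet_sup, edgeSet_fromEdgeSet] at this
      rcases this with h1 | h1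
      · exact h1
      · exfalso
        have : e = s(u, v) := h1.1
        exact he (this ▸ hec)
    exact hG (c.transfer G hsub) (hc.transfer hsub)

variable [Fintype V] [DecidableEq V]

/-- There exists a maximal acyclic edge subset, and it spans reachability. -/
lemma my_spanning_forest (S : SimpleGraph V) [DecidableRel S.Adj]
    (A : Finset (Finset (Sym2 V)))
    (hA : ∀ F, F ∈ A ↔ F ⊆ S.edgeFinset ∧ (SimpleGraph.fromEdgeSet (F : Set (Sym2 V))).IsAcyclic) :
    ∃ F ∈ A, ∀ u v, S.Reachable u v →
      (SimpleGraph.fromEdgeSet (F : Set (Sym2 V))).Reachable u v := by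
  have hne : A.Nonempty := ⟨∅, (hA ∅).mpr (by simp)⟩
  obtain ⟨F, hF, hmax⟩ := A.exists_maximal hne
  obtain ⟨hFsub, hFac⟩ := (hA F).mp hF
  refine ⟨F, hF, ?_⟩
  have hadj : ∀ u v, S.Adj u v →
      (SimpleGraph.fromEdgeSet (F : Set (Sym2 V))).Reachable u v := by
    intro u v huv
    by_contra hur
    have hins : insert s(u, v) F ∈ A := by
      rw [hA]
      constructor
      · exact Finset.insert_subset (by rwa [SimpleGraph.mem_edgeFinset]) hFsub
      · have : ((insert s(u, v) F : Finset (Sym2 V)) : Set (Sym2 V))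
            = (F : Set (Sym2 V)) ∪ {s(u, v)} := by
          rw [Finset.coe_insert, Set.insert_eq, Set.union_comm]
        rw [this, fromEdgeSet_union]
        exact my_acyclic_sup hFac hur
    have hmem : s(u, v) ∉ F := by
      intro hm
      exact hur (SimpleGraph.Adj.reachable (by rw [fromEdgeSet_adj]; exact ⟨hm, huv.ne⟩))
    exact (Finset.ssubset_insert hmem).2 (hmax hins (Finset.ssubset_insert hmem).1)
  intro u v huv
  obtain ⟨w⟩ := huv
  induction w with
  | nil => exact Reachable.refl _
  | cons h p ih => exact (hadj _ _ h).trans ih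

lemma my_forest_count (G : SimpleGraph V) [Fintype G.edgeSet]
    (hG : G.IsAcyclic)
    (root : V → V) (hroot : ∀ v, G.Reachable v (root v))
    (hrootc : ∀ u v, G.Adj u v → root u = root v) :
    (univ.filter (fun v => v ≠ root v)).card ≤ G.edgeFinset.card := by
  classical
  have hP' : ∀ v, ∃ p : G.Walk v (root v), p.IsPath := by
    intro v
    obtain ⟨w⟩ := hroot v
    exact ⟨w.toPath, w.toPath.2⟩
  choose P hP using hP'
  have key : ∀ v, v ≠ root v →
      G.Adj v ((P v).getVert 1) ∧ ((P ((P v).getVert 1)).length + 1 = (P v).length) := by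
    intro v hv
    obtain ⟨w', h, q, hcons⟩ := Walk.exists_eq_cons_of_ne hv (P v)
    have hg : (P v).getVert 1 = w' := by
      rw [hcons]
      exact (Walk.getVert_cons_succ (n := 0) q h).trans q.getVert_zero
    have hq : q.IsPath := by
      have := hP v
      rw [hcons, Walk.cons_isPath_iff] at this
      exact this.1
    have hr : root v = root w' := hrootc v w' h
    have hup : q.copy rfl hr = P w' := by
      have := hG.path_unique ⟨q.copy rfl hr, (by rwa [Walk.isPath_copy] : (q.copy rfl hr).IsPath)⟩ ⟨P w', hP w'⟩
      exact congrArg Subtype.val this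
    rw [hg]
    refine ⟨h, ?_⟩
    have h1 : (P w').length = q.length := by rw [← hup, Walk.length_copy]
    have h2 : (P v).length = q.length + 1 := by rw [hcons, Walk.length_cons]
    omega
  apply Finset.card_le_card_of_injOn (fun v => s(v, (P v).getVert 1))
  · intro v hv
    rw [Finset.mem_coe, Finset.mem_filter] at hv
    rw [Finset.mem_coe, SimpleGraph.mem_edgeFinset, SimpleGraph.mem_edgeSet]
    exact (key v hv.2).1
  · intro v hv w hw hvw
    rw [Finset.coe_filter, Set.mem_setOf_eq] at hv hw
    by_contra hne
    simp only [Sym2.eq_iff] at hvw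
    rcases hvw with ⟨rfl, _⟩ | ⟨h1, h2⟩
    · exact hne rfl
    · have k1 := (key v hv.2).2
      have k2 := (key w hw.2).2
      rw [h2] at k1
      rw [← h1] at k2
      omega

end Helpers


lemma my_arith (d w m : ℕ) (hd : 1 ≤ d) (hw1 : 1 ≤ w)
    (h2 : 2*m + w ≤ w*w) (h3 : 2*m ≤ w*d)
    (h4 : w = d+1 → 2*m + 1 ≤ (d+1)*d) :
    (2 / ((d : ℝ) + 1) + 1 / (((d : ℝ) + 2) * ((d : ℝ) + 1) * d)) * m ≤ (w : ℝ) - 1 := by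
  have hd' : (1:ℝ) ≤ d := by exact_mod_cast hd
  have hD : (0:ℝ) < ((d:ℝ)+2)*((d:ℝ)+1)*d := by positivity
  have hc : 2 / ((d : ℝ) + 1) + 1 / (((d : ℝ) + 2) * ((d : ℝ) + 1) * d)
      = (2*((d:ℝ)+2)*d + 1) / (((d:ℝ)+2)*((d:ℝ)+1)*d) := by
    field_simp
  rw [hc, div_mul_eq_mul_div, div_le_iff₀ hD]
  rcases Nat.eq_zero_or_pos m with hm | hm
  · subst hm
    push_cast
    have : (1:ℝ) ≤ w := by exact_mod_cast hw1
    nlinarith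
  · have hw2 : 2 ≤ w := by nlinarith
    have h2R : 2*(m:ℝ) + w ≤ w*w := by exact_mod_cast h2
    have h3R : 2*(m:ℝ) ≤ w*d := by exact_mod_cast h3
    have hw2R : (2:ℝ) ≤ w := by exact_mod_cast hw2
    rcases lt_trichotomy w (d+1) with hwd | hwd | hwd
    · -- w ≤ d
      have hwdR : (w:ℝ) ≤ d := by
        have : w ≤ d := by omega
        exact_mod_cast this
      nlinarith [mul_nonneg (sub_nonneg.mpr hw2R) (sub_nonneg.mpr hwdR),
        mul_nonneg (mul_nonneg (sub_nonneg.mpr hw2R) (sub_nonneg.mpr hwdR)) (by linarith : (0:ℝ) ≤ d),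
        sq_nonneg ((w:ℝ) - d), sq_nonneg ((w:ℝ)-1),
        mul_le_mul_of_nonneg_left h2R (le_of_lt hD)]
    · -- w = d+1
      have h4' := h4 (by omega)
      have h4R : 2*(m:ℝ) + 1 ≤ ((d:ℝ)+1)*d := by exact_mod_cast h4'
      have hwR : (w:ℝ) = (d:ℝ)+1 := by exact_mod_cast hwd
      rw [hwR]
      nlinarith [sq_nonneg ((d:ℝ)), mul_pos (mul_pos (by linarith : (0:ℝ) < (d:ℝ)+2) (by linarith : (0:ℝ) < (d:ℝ)+1)) (by linarith : (0:ℝ) < (d:ℝ))]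
    · -- w ≥ d+2
      have hwdR : (d:ℝ) + 2 ≤ w := by
        have : d + 2 ≤ w := by omega
        exact_mod_cast this
      nlinarith [mul_nonneg (sub_nonneg.mpr hwdR) (by linarith : (0:ℝ) ≤ d),
        mul_nonneg (mul_nonneg (sub_nonneg.mpr hwdR) (by linarith : (0:ℝ) ≤ d)) (by linarith : (0:ℝ) ≤ d),
        sq_nonneg ((d:ℝ))]

open scoped Classical in
/-- If `H` is a graph with maximum degree at most `d` (`d ≥ 1`) having no connected
component isomorphic to `K_{d+1}`, then every subgraph `S ≤ H` with at least one edge,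
with `s` edges and maximum forest size `f`, satisfies
`f/s ≥ 2/(d+1) + 1/((d+2)(d+1)d)`. -/
theorem stmt16 {V : Type*} [Fintype V] [DecidableEq V] (d : ℕ) (hd : 1 ≤ d)
    (H : SimpleGraph V) [DecidableRel H.Adj]
    (hdeg : ∀ v : V, H.degree v ≤ d)
    (hnoK : ¬ ∃ W : Finset V, W.card = d + 1 ∧
      (∀ u ∈ W, ∀ v ∈ W, u ≠ v → H.Adj u v) ∧
      (∀ u ∈ W, ∀ v : V, H.Adj u v → v ∈ W))
    (S : SimpleGraph V) [DecidableRel S.Adj] (hSH : S ≤ H)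
    (hs : S.edgeFinset.Nonempty)
    (f : ℕ)
    (hf : f = (S.edgeFinset.powerset.filter
      (fun F : Finset (Sym2 V) =>
        (SimpleGraph.fromEdgeSet (F : Set (Sym2 V))).IsAcyclic)).sup Finset.card) :
    2 / ((d : ℝ) + 1) + 1 / (((d : ℝ) + 2) * ((d : ℝ) + 1) * d)
      ≤ (f : ℝ) / (S.edgeFinset.card : ℝ) := by
  classical
  haveI : Fintype S.ConnectedComponent := Fintype.ofFinite _
  set c : ℝ := 2 / ((d : ℝ) + 1) + 1 / (((d : ℝ) + 2) * ((d : ℝ) + 1) * d) with hcdef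
  set W : S.ConnectedComponent → Finset V :=
    fun K => univ.filter (fun v => S.connectedComponentMk v = K) with hW
  set g : Sym2 V → S.ConnectedComponent :=
    fun e => S.connectedComponentMk (Quot.out e).1 with hgdef
  set E : S.ConnectedComponent → Finset (Sym2 V) :=
    fun K => S.edgeFinset.filter (fun e => g e = K) with hE
  -- g sends an edge to the component of any of its endpoints
  have hgmem : ∀ e ∈ S.edgeFinset, ∀ a ∈ e, g e = S.connectedComponentMk a := by
    intro e he
    induction e with
    | _ x y =>
      rw [SimpleGraph.mem_edgeFinset, SimpleGraph.mem_edgeSet] at he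
      intro a ha
      have hout : (Quot.out s(x, y)).1 ∈ s(x, y) := Sym2.out_fst_mem _
      rw [Sym2.mem_iff] at ha hout
      have hxy : S.connectedComponentMk x = S.connectedComponentMk y :=
        SimpleGraph.ConnectedComponent.connectedComponentMk_eq_of_adj he
      show S.connectedComponentMk (Quot.out s(x, y)).1 = S.connectedComponentMk a
      rcases hout with h1 | h1 <;> rcases ha with h2 | h2 <;> rw [h1, h2] <;>
        first | rfl | exact hxy | exact hxy.symm
  -- edge partition
  have hs_sum : S.edgeFinset.card = ∑ K, (E K).card :=
    Finset.card_eq_sum_card_fiberwise (fun e _ => mem_univ (g e))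
  -- vertex partition
  have hv_sum : Fintype.card V = ∑ K, (W K).card := by
    rw [← Finset.card_univ]
    exact Finset.card_eq_sum_card_fiberwise (fun v _ => mem_univ _)
  -- components are nonempty
  have hWne : ∀ K, 1 ≤ (W K).card := by
    intro K
    obtain ⟨v, hv⟩ := K.exists_rep
    refine Finset.card_pos.mpr ⟨v, ?_⟩
    simp only [hW, Finset.mem_filter, Finset.mem_univ, true_and]
    exact hv
  -- neighbor containment
  have hsubW : ∀ K, ∀ v ∈ W K, S.neighborFinset v ⊆ (W K).erase v := by
    intro K v hv u hu
    rw [SimpleGraph.mem_neighborFinset] at hu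
    rw [Finset.mem_erase]
    refine ⟨hu.ne', ?_⟩
    simp only [hW, Finset.mem_filter, Finset.mem_univ, true_and] at hv ⊢
    rw [← hv]
    exact SimpleGraph.ConnectedComponent.connectedComponentMk_eq_of_adj hu.symm
  have hdS : ∀ v, S.degree v ≤ d := by
    intro v
    refine le_trans (Finset.card_le_card ?_) (hdeg v)
    intro u hu
    rw [SimpleGraph.mem_neighborFinset] at hu ⊢
    exact hSH hu
  -- handshake per component
  have hand : ∀ K, ∑ v ∈ W K, S.degree v = 2 * (E K).card := by
    intro K
    set DK : Finset S.Dart := univ.filter (fun dd => g dd.edge = K) with hDK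
    have hdfst : ∀ dd : S.Dart, g dd.edge = S.connectedComponentMk dd.fst := by
      intro dd
      exact hgmem dd.edge (SimpleGraph.mem_edgeFinset.mpr dd.edge_mem) dd.fst
        (Sym2.mem_mk_left dd.fst dd.snd)
    have step1 : DK.card = ∑ v ∈ W K, S.degree v := by
      rw [Finset.card_eq_sum_card_fiberwise
        (f := fun dd : S.Dart => dd.fst) (t := W K) ?_]
      · refine Finset.sum_congr rfl fun v hv => ?_
        rw [← SimpleGraph.dart_fst_fiber_card_eq_degree]
        congr 1
        ext dd
        simp only [hDK, Finset.mem_filter, Finset.mem_univ, true_and, and_iff_right_iff_imp]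
        intro hfst
        rw [hdfst, hfst]
        simp only [hW, Finset.mem_filter] at hv
        exact hv.2
      · intro dd hdd
        simp only [hDK, Finset.mem_coe, Finset.mem_filter, Finset.mem_univ, true_and] at hdd
        simp only [hW, Finset.mem_coe, Finset.mem_filter, Finset.mem_univ, true_and]
        rw [← hdfst]
        exact hdd
    have step2 : DK.card = 2 * (E K).card := by
      rw [Finset.card_eq_sum_card_fiberwise
        (f := fun dd : S.Dart => dd.edge) (t := E K) ?_]
      · rw [Finset.sum_congr rfl (g := fun _ => 2) ?_, Finset.sum_const, smul_eq_mul,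
          mul_comm]
        intro e he
        simp only [hE, Finset.mem_filter] at he
        have : DK.filter (fun dd => dd.edge = e) = univ.filter (fun dd => dd.edge = e) := by
          ext dd
          simp only [hDK, Finset.mem_filter, Finset.mem_univ, true_and, and_iff_right_iff_imp]
          intro h
          rw [h]; exact he.2
        rw [this]
        exact SimpleGraph.dart_edge_fiber_card S e (SimpleGraph.mem_edgeFinset.mp he.1)
      · intro dd hdd
        simp only [hDK, Finset.mem_coe, Finset.mem_filter, Finset.mem_univ, true_and] at hdd
        simp only [hE, Finset.mem_coe, Finset.mem_filter]
        exact ⟨SimpleGraph.mem_edgeFinset.mpr dd.edge_mem, hdd⟩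
    rw [← step1, step2]
  -- degree bound within component
  have hdegW : ∀ K, ∀ v ∈ W K, S.degree v + 1 ≤ (W K).card := by
    intro K v hv
    have hc := Finset.card_le_card (hsubW K v hv)
    rw [Finset.card_erase_of_mem hv, SimpleGraph.card_neighborFinset_eq_degree] at hc
    have h1 := hWne K
    omega
  have h2 : ∀ K, 2 * (E K).card + (W K).card ≤ (W K).card * (W K).card := by
    intro K
    have : ∑ v ∈ W K, (S.degree v + 1) ≤ ∑ _v ∈ W K, (W K).card :=
      Finset.sum_le_sum (fun v hv => hdegW K v hv)
    rw [Finset.sum_add_distrib, Finset.sum_const, Finset.sum_const, smul_eq_mul,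
      smul_eq_mul, mul_one, hand K] at this
    exact this
  have h3 : ∀ K, 2 * (E K).card ≤ (W K).card * d := by
    intro K
    have : ∑ v ∈ W K, S.degree v ≤ ∑ _v ∈ W K, d :=
      Finset.sum_le_sum (fun v _ => hdS v)
    rw [Finset.sum_const, smul_eq_mul, hand K] at this
    exact this
  -- the K_{d+1} exclusion
  have h4 : ∀ K, (W K).card = d + 1 → 2 * (E K).card + 1 ≤ (d + 1) * d := by
    intro K hcard
    by_contra hcon
    push_neg at hcon
    have hge : (d + 1) * d ≤ 2 * (E K).card := by omega
    rw [← hand K] at hge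
    have halldeg : ∀ v ∈ W K, S.degree v = d := by
      intro v hv
      by_contra hne
      have hlt : S.degree v < d := lt_of_le_of_ne (hdS v) hne
      have hsum_lt : ∑ u ∈ W K, S.degree u < ∑ _u ∈ W K, d :=
        Finset.sum_lt_sum (fun i _ => hdS i) ⟨v, hv, hlt⟩
      rw [hand K, Finset.sum_const, smul_eq_mul, hcard] at hsum_lt
      omega
    have hnbr : ∀ v ∈ W K, S.neighborFinset v = (W K).erase v := by
      intro v hv
      refine Finset.eq_of_subset_of_card_le (hsubW K v hv) ?_
      rw [Finset.card_erase_of_mem hv, hcard, SimpleGraph.card_neighborFinset_eq_degree,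
        halldeg v hv]
      omega
    have hnbrH : ∀ v ∈ W K, H.neighborFinset v = S.neighborFinset v := by
      intro v hv
      refine (Finset.eq_of_subset_of_card_le ?_ ?_).symm
      · intro u hu
        rw [SimpleGraph.mem_neighborFinset] at hu ⊢
        exact hSH hu
      · rw [SimpleGraph.card_neighborFinset_eq_degree, SimpleGraph.card_neighborFinset_eq_degree,
          halldeg v hv]
        exact hdeg v
    apply hnoK
    refine ⟨W K, hcard, ?_, ?_⟩
    · intro u hu v hv huv
      have : v ∈ S.neighborFinset u := by
        rw [hnbr u hu, Finset.mem_erase]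
        exact ⟨fun h => huv h.symm, hv⟩
      rw [SimpleGraph.mem_neighborFinset] at this
      exact hSH this
    · intro u hu v hv
      have : v ∈ H.neighborFinset u := by
        rw [SimpleGraph.mem_neighborFinset]; exact hv
      rw [hnbrH u hu, hnbr u hu] at this
      exact Finset.mem_of_mem_erase this
  -- the forest
  obtain ⟨F, hFA, hFreach⟩ := my_spanning_forest S
    (S.edgeFinset.powerset.filter
      (fun F : Finset (Sym2 V) =>
        (SimpleGraph.fromEdgeSet (F : Set (Sym2 V))).IsAcyclic))
    (by intro F; simp [Finset.mem_filter, Finset.mem_powerset])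
  set G : SimpleGraph V := SimpleGraph.fromEdgeSet (F : Set (Sym2 V)) with hGdef
  haveI : Fintype G.edgeSet := Fintype.ofFinite _
  have hFprop : F ⊆ S.edgeFinset ∧ G.IsAcyclic := by
    simpa [Finset.mem_filter, Finset.mem_powerset] using hFA
  have hGle : G ≤ S := by
    rw [hGdef, ← SimpleGraph.fromEdgeSet_edgeSet (G := S)]
    exact SimpleGraph.fromEdgeSet_mono (by
      intro e he
      exact SimpleGraph.mem_edgeFinset.mp (hFprop.1 he))
  -- roots
  have hrep' : ∀ K : S.ConnectedComponent, ∃ v, S.connectedComponentMk v = K :=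
    fun K => K.exists_rep
  choose rep hrep using hrep'
  set root : V → V := fun v => rep (S.connectedComponentMk v) with hrootdef
  have hrootS : ∀ v, S.Reachable v (root v) := by
    intro v
    exact (SimpleGraph.ConnectedComponent.exact (hrep (S.connectedComponentMk v))).symm
  have hrootG : ∀ v, G.Reachable v (root v) := fun v => hFreach _ _ (hrootS v)
  have hrootc : ∀ u v, G.Adj u v → root u = root v := by
    intro u v huv
    have : S.connectedComponentMk u = S.connectedComponentMk v :=
      SimpleGraph.ConnectedComponent.connectedComponentMk_eq_of_adj (hGle huv)
    rw [hrootdef]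
    simp only [this]
  have count1 := my_forest_count G hFprop.2 root hrootG hrootc
  have hGF : G.edgeFinset.card ≤ F.card := by
    refine Finset.card_le_card ?_
    intro e he
    rw [SimpleGraph.mem_edgeFinset, hGdef, SimpleGraph.edgeSet_fromEdgeSet] at he
    exact he.1
  have hfF : F.card ≤ f := by
    rw [hf]
    exact Finset.le_sup hFA
  -- fixed points count
  have hRcard : (univ.filter (fun v => v = root v)).card = Fintype.card S.ConnectedComponent := by
    rw [← Finset.card_univ]
    symm
    refine Finset.card_bij (fun K _ => rep K) ?_ ?_ ?_
    · intro K _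
      simp only [Finset.mem_filter, Finset.mem_univ, true_and, hrootdef]
      rw [hrep K]
    · intro K _ K' _ h
      rw [← hrep K, ← hrep K', h]
    · intro v hv
      simp only [Finset.mem_filter, Finset.mem_univ, true_and, hrootdef] at hv
      exact ⟨S.connectedComponentMk v, mem_univ _, hv.symm⟩
  have hsplit : (univ.filter (fun v => v ≠ root v)).card
      + (univ.filter (fun v => v = root v)).card = Fintype.card V := by
    rw [← Finset.card_univ, add_comm]
    exact Finset.card_filter_add_card_filter_not _
  -- per-component inequality
  have hperK : ∀ K, c * ((E K).card : ℝ) ≤ ((W K).card : ℝ) - 1 := by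
    intro K
    exact my_arith d (W K).card (E K).card hd (hWne K) (h2 K) (h3 K) (h4 K)
  -- assemble
  have hspos : (0:ℝ) < (S.edgeFinset.card : ℝ) := by
    have := Finset.card_pos.mpr hs
    exact_mod_cast this
  rw [le_div_iff₀ hspos]
  calc c * (S.edgeFinset.card : ℝ)
      = ∑ K, c * ((E K).card : ℝ) := by
        rw [← Finset.mul_sum]
        congr 1
        rw [hs_sum]
        push_cast
        ring
    _ ≤ ∑ K, (((W K).card : ℝ) - 1) := Finset.sum_le_sum (fun K _ => hperK K)
    _ = (Fintype.card V : ℝ) - (Fintype.card S.ConnectedComponent : ℝ) := by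
        rw [Finset.sum_sub_distrib, hv_sum]
        push_cast
        simp [Finset.card_univ]
    _ ≤ (f : ℝ) := by
        have hn : Fintype.card V ≤ f + Fintype.card S.ConnectedComponent := by
          have h5 := le_trans count1 (le_trans hGF hfF)
          omega
        have hnR : (Fintype.card V : ℝ) ≤ (f : ℝ) + (Fintype.card S.ConnectedComponent : ℝ) := by
          exact_mod_cast hn
        linarith
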